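/- The horizontal boundary map ∂̄, sending a tableau t = (t_i^k), 0 ≤ i ≤ k ≤ n, to h = (h_i^k = t_i^k − t_{i-1}^k), 0 < i ≤ k ≤ n, restricts to a bijection (indeed a linear isomorphism) between the set of tableaux in the cone C_2 with t_0^k = 0 for all k and the Gelfand–Zeitlin cone C_GZ defined by the interlacing inequalities. -/
import Mathlib


/-- Tableaux in the cone `C₂`, normalized by `t 0 k = 0` and by vanishing
outside the index range `0 ≤ i ≤ k ≤ n`. -/
def C2Zero (n : ℕ) : Set (ℕ → ℕ → ℝ) :=
  { t | (∀ i k, 0 < i → i ≤ k → k < n →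
      t i (k + 1) + t (i - 1) k ≥ t (i - 1) (k + 1) + t i k ∧
      t i (k + 1) + t i k ≥ t (i + 1) (k + 1) + t (i - 1) k) ∧
    (∀ k, t 0 k = 0) ∧
    (∀ i k, (n < k ∨ k < i) → t i k = 0) }

/-- The Gelfand–Zeitlin cone of interlacing arrays `h i k` (`0 < i ≤ k ≤ n`),
normalized by vanishing outside this index range. -/
def GZCone (n : ℕ) : Set (ℕ → ℕ → ℝ) :=
  { h | (∀ i k, 0 < i → i ≤ k → k < n →
      h i (k + 1) ≥ h i k ∧ h i k ≥ h (i + 1) (k + 1)) ∧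
    (∀ i k, (n < k ∨ k < i ∨ i = 0) → h i k = 0) }

/-- The horizontal boundary map `h i k = t i k − t (i-1) k` (on the index
range `0 < i ≤ k ≤ n`, and `0` outside). -/
noncomputable def horizontalBoundary (n : ℕ) (t : ℕ → ℕ → ℝ) : ℕ → ℕ → ℝ :=
  fun i k => if 1 ≤ i ∧ i ≤ k ∧ k ≤ n then t i k - t (i - 1) k else 0

/-- Inverse map: partial row sums. -/
noncomputable def gzToT (n : ℕ) (h : ℕ → ℕ → ℝ) : ℕ → ℕ → ℝ :=
  fun i k => if i ≤ k ∧ k ≤ n then ∑ j ∈ Finset.Icc 1 i, h j k else 0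

lemma gzToT_zero (n : ℕ) (h : ℕ → ℕ → ℝ) (k : ℕ) : gzToT n h 0 k = 0 := by
  simp [gzToT]

lemma gzToT_step (n : ℕ) (h : ℕ → ℕ → ℝ) (j k : ℕ) (h1 : j + 1 ≤ k) (h2 : k ≤ n) :
    gzToT n h (j + 1) k = gzToT n h j k + h (j + 1) k := by
  have hj : j ≤ k := Nat.le_of_succ_le h1
  simp only [gzToT, if_pos (And.intro h1 h2), if_pos (And.intro hj h2)]
  exact Finset.sum_Icc_succ_top (Nat.le_add_left 1 j) _

lemma gzToT_leftInv (n : ℕ) (t : ℕ → ℕ → ℝ) (ht : t ∈ C2Zero n) :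
    gzToT n (horizontalBoundary n t) = t := by
  obtain ⟨_, h0, hout⟩ := ht
  funext i k
  by_cases hk : k ≤ n
  · by_cases hik : i ≤ k
    · induction i with
      | zero => rw [gzToT_zero, h0]
      | succ j ih =>
        rw [gzToT_step n _ j k hik hk, ih (Nat.le_of_succ_le hik)]
        have hb : horizontalBoundary n t (j + 1) k = t (j + 1) k - t j k := by
          simp [horizontalBoundary, Nat.le_add_left 1 j, hik, hk]
        rw [hb]; ring
    · rw [hout i k (Or.inr (Nat.lt_of_not_le hik))]
      simp [gzToT, hik]
  · rw [hout i k (Or.inl (Nat.lt_of_not_le hk))]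
    simp [gzToT, hk]

lemma gzToT_rightInv (n : ℕ) (h : ℕ → ℕ → ℝ) (hh : h ∈ GZCone n) :
    horizontalBoundary n (gzToT n h) = h := by
  obtain ⟨_, hout⟩ := hh
  funext i k
  by_cases c : 1 ≤ i ∧ i ≤ k ∧ k ≤ n
  · obtain ⟨j, rfl⟩ : ∃ j, i = j + 1 := ⟨i - 1, by omega⟩
    simp only [horizontalBoundary, if_pos c, Nat.add_sub_cancel]
    rw [gzToT_step n h j k c.2.1 c.2.2]; ring
  · rw [hout i k (by omega)]
    simp only [horizontalBoundary, if_neg c]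

lemma gzToT_mem (n : ℕ) (h : ℕ → ℕ → ℝ) (hh : h ∈ GZCone n) :
    gzToT n h ∈ C2Zero n := by
  obtain ⟨hineq, hout⟩ := hh
  refine ⟨?_, fun k => gzToT_zero n h k, ?_⟩
  · intro i k hi hik hkn
    obtain ⟨j, rfl⟩ : ∃ j, i = j + 1 := ⟨i - 1, by omega⟩
    have hq := hineq (j + 1) k hi hik hkn
    have e1 : gzToT n h (j + 1) (k + 1) = gzToT n h j (k + 1) + h (j + 1) (k + 1) :=
      gzToT_step n h j (k + 1) (by omega) (by omega)
    have e2 : gzToT n h (j + 1) k = gzToT n h j k + h (j + 1) k :=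
      gzToT_step n h j k hik (by omega)
    have e3 : gzToT n h (j + 2) (k + 1) = gzToT n h (j + 1) (k + 1) + h (j + 2) (k + 1) :=
      gzToT_step n h (j + 1) (k + 1) (by omega) (by omega)
    simp only [Nat.add_sub_cancel]
    constructor <;> [linarith [hq.1]; linarith [hq.2]]
  · intro i k hc
    simp only [gzToT]
    rw [if_neg (by omega)]

theorem horizontalBoundary_bijOn (n : ℕ) (hn : 0 < n) :
    Set.BijOn (horizontalBoundary n) (C2Zero n) (GZCone n) ∧
    (∀ (t₁ t₂ : ℕ → ℕ → ℝ) (c : ℝ),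
      horizontalBoundary n (fun i k => c * t₁ i k + t₂ i k) =
        fun i k => c * horizontalBoundary n t₁ i k + horizontalBoundary n t₂ i k) := by
  constructor
  · refine ⟨?_, ?_, ?_⟩
    · intro t ht
      obtain ⟨hineq, h0, hout⟩ := ht
      constructor
      · intro i k hi hik hkn
        have hq := hineq i k hi hik hkn
        have c1 : 1 ≤ i ∧ i ≤ k + 1 ∧ k + 1 ≤ n := ⟨hi, by omega, by omega⟩
        have c2 : 1 ≤ i ∧ i ≤ k ∧ k ≤ n := ⟨hi, hik, by omega⟩
        have c3 : 1 ≤ i + 1 ∧ i + 1 ≤ k + 1 ∧ k + 1 ≤ n := ⟨by omega, by omega, by omega⟩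
        simp only [horizontalBoundary, if_pos c1, if_pos c2, if_pos c3, Nat.add_sub_cancel]
        constructor <;> [linarith [hq.1]; linarith [hq.2]]
      · intro i k hc
        simp only [horizontalBoundary]
        rw [if_neg (by omega)]
    · intro t₁ h₁ t₂ h₂ heq
      rw [← gzToT_leftInv n t₁ h₁, ← gzToT_leftInv n t₂ h₂, heq]
    · intro h hh
      exact ⟨gzToT n h, gzToT_mem n h hh, gzToT_rightInv n h hh⟩
  · intro t₁ t₂ c
    funext i k
    simp only [horizontalBoundary]
    split_ifs <;> ring
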